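/- Let A: X → X* be continuous, linear, symmetric, and monotone. Then for every (x,x*) ∈ X×X*, q_A*(x* + Ax) = q_A(x) + ⟨x,x*⟩ + q_A*(x*); in particular (taking x* = 0), q_A*(Ax) = q_A(x) for every x ∈ X. -/

import Mathlib

noncomputable section
open Filter Topology

/-- The Fenchel conjugate of `F : X × X* → (-∞,+∞]`, as a function on `X* × X`:
`F*(x*,x) = sup_{(y,y*)} (⟨y,x*⟩ + ⟨x,y*⟩ - F(y,y*))`. -/
def conj2 {X : Type*} [NormedAddCommGroup X] [NormedSpace ℝ X]
    (F : X × (X →L[ℝ] ℝ) → EReal) : (X →L[ℝ] ℝ) × X → EReal :=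
  fun p => ⨆ q : X × (X →L[ℝ] ℝ), ((p.1 q.1 + q.2 p.2 : ℝ) : EReal) - F q

/-- `F` is autoconjugate: `F*(x*,x) = F(x,x*)` for all `(x,x*)`. -/
def Autoconjugate {X : Type*} [NormedAddCommGroup X] [NormedSpace ℝ X]
    (F : X × (X →L[ℝ] ℝ) → EReal) : Prop :=
  ∀ (x : X) (x' : X →L[ℝ] ℝ), conj2 F (x', x) = F (x, x')

/-- `F` is a representer for the set-valued operator `A : X ⇉ X*`:
`gra A = {(x,x*) : F(x,x*) = ⟨x,x*⟩}`. -/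
def IsRepresenter {X : Type*} [NormedAddCommGroup X] [NormedSpace ℝ X]
    (F : X × (X →L[ℝ] ℝ) → EReal) (A : X → Set (X →L[ℝ] ℝ)) : Prop :=
  ∀ (x : X) (x' : X →L[ℝ] ℝ), x' ∈ A x ↔ F (x, x') = ((x' x : ℝ) : EReal)

/-- A set-valued operator `A : X ⇉ X*` is monotone. -/
def MonotoneOp {X : Type*} [NormedAddCommGroup X] [NormedSpace ℝ X]
    (A : X → Set (X →L[ℝ] ℝ)) : Prop :=
  ∀ ⦃x y : X⦄ ⦃x' y' : X →L[ℝ] ℝ⦄, x' ∈ A x → y' ∈ A y → 0 ≤ (x' - y') (x - y)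

/-- A set-valued operator is maximal monotone if it is monotone and admits no proper
monotone extension (in the sense of graph inclusion). -/
def MaximalMonotoneOp {X : Type*} [NormedAddCommGroup X] [NormedSpace ℝ X]
    (A : X → Set (X →L[ℝ] ℝ)) : Prop :=
  MonotoneOp A ∧ ∀ B : X → Set (X →L[ℝ] ℝ), MonotoneOp B → (∀ x, A x ⊆ B x) → B = A

/-- The quadratic function `q_A(x) = ½⟨x,Ax⟩` associated with a continuous linear
`A : X → X*`. -/
def qF {X : Type*} [NormedAddCommGroup X] [NormedSpace ℝ X]
    (A : X →L[ℝ] X →L[ℝ] ℝ) : X → ℝ :=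
  fun x => (1 / 2) * A x x

/-- The Fenchel conjugate of a real-valued function `φ : X → ℝ`, as an `EReal`-valued
function on `X*`: `φ*(x*) = sup_y (⟨y,x*⟩ - φ(y))`. -/
def legendre {X : Type*} [NormedAddCommGroup X] [NormedSpace ℝ X]
    (φ : X → ℝ) : (X →L[ℝ] ℝ) → EReal :=
  fun x' => ⨆ y : X, ((x' y - φ y : ℝ) : EReal)

/-- The symmetric part `A₊ = ½A + ½A*` of a continuous linear `A : X → X*`, where the
adjoint (restricted to `X`) is `A.flip`. -/
def symPart {X : Type*} [NormedAddCommGroup X] [NormedSpace ℝ X]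
    (A : X →L[ℝ] X →L[ℝ] ℝ) : X →L[ℝ] X →L[ℝ] ℝ :=
  (1 / 2 : ℝ) • (A + A.flip)

/-- The antisymmetric part `A∘ = ½A - ½A*` of a continuous linear `A : X → X*`. -/
def antiPart {X : Type*} [NormedAddCommGroup X] [NormedSpace ℝ X]
    (A : X →L[ℝ] X →L[ℝ] ℝ) : X →L[ℝ] X →L[ℝ] ℝ :=
  (1 / 2 : ℝ) • (A - A.flip)

/-- The Fitzpatrick function of a continuous linear `A : X → X*`:
`F_A(x,x*) = sup_y (⟨x,Ay⟩ + ⟨y,x*⟩ - ⟨y,Ay⟩)`. -/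
def fitz {X : Type*} [NormedAddCommGroup X] [NormedSpace ℝ X]
    (A : X →L[ℝ] X →L[ℝ] ℝ) : X × (X →L[ℝ] ℝ) → EReal :=
  fun p => ⨆ y : X, ((A y p.1 + p.2 y - A y y : ℝ) : EReal)

/-- Proposition 2.2. For `A : X → X*` continuous, linear, symmetric and
monotone: `q_A*(x* + Ax) = q_A(x) + ⟨x,x*⟩ + q_A*(x*)` for all `(x,x*)`, and in particular
`q_A*(Ax) = q_A(x)` for all `x`. -/
def erealAddIso (c : ℝ) : EReal ≃o EReal where
  toFun t := (c : EReal) + t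
  invFun t := ((-c : ℝ) : EReal) + t
  left_inv t := by
    show ((-c : ℝ) : EReal) + ((c : EReal) + t) = t
    rw [← add_assoc, ← EReal.coe_add]; simp
  right_inv t := by
    show (c : EReal) + (((-c : ℝ) : EReal) + t) = t
    rw [← add_assoc, ← EReal.coe_add]; simp
  map_rel_iff' := by
    intro a b
    constructor
    · intro h
      have h2 := add_le_add_right h ((-c : ℝ) : EReal)
      simp only [Equiv.coe_fn_mk] at h2
      rwa [← add_assoc, ← add_assoc, ← EReal.coe_add, neg_add_cancel, EReal.coe_zero,
        zero_add, zero_add] at h2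
    · intro h; exact add_le_add_right h (c : EReal)

lemma ereal_add_iSup {ι : Sort*} (c : ℝ) (f : ι → EReal) :
    (c : EReal) + ⨆ i, f i = ⨆ i, ((c : EReal) + f i) :=
  (erealAddIso c).map_iSup f

theorem stmt1 {X : Type*} [NormedAddCommGroup X] [NormedSpace ℝ X] [CompleteSpace X]
    (hrefl : Function.Surjective (NormedSpace.inclusionInDoubleDual ℝ X))
    (A : X →L[ℝ] X →L[ℝ] ℝ)
    (hsym : ∀ x y : X, A x y = A y x)
    (hmono : ∀ x : X, 0 ≤ A x x) :
    (∀ (x : X) (x' : X →L[ℝ] ℝ),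
      legendre (qF A) (x' + A x)
        = ((qF A x : ℝ) : EReal) + ((x' x : ℝ) : EReal) + legendre (qF A) x') ∧
    ∀ x : X, legendre (qF A) (A x) = ((qF A x : ℝ) : EReal) := by
  have hmain : ∀ (x : X) (x' : X →L[ℝ] ℝ),
      legendre (qF A) (x' + A x)
        = ((qF A x : ℝ) : EReal) + ((x' x : ℝ) : EReal) + legendre (qF A) x' := by
    intro x x'
    have key : ∀ z : X, ((x' + A x) (x + z) - qF A (x + z) : ℝ)
        = (qF A x + x' x) + (x' z - qF A z) := by
      intro z
      have h1 : A z x = A x z := hsym z x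
      simp only [qF, ContinuousLinearMap.add_apply, map_add]
      ring_nf
      linarith
    calc legendre (qF A) (x' + A x)
        = ⨆ z : X, (((x' + A x) (x + z) - qF A (x + z) : ℝ) : EReal) :=
          ((Equiv.addLeft x).iSup_comp
            (g := fun y => (((x' + A x) y - qF A y : ℝ) : EReal))).symm
      _ = ⨆ z : X, (((qF A x + x' x) + (x' z - qF A z) : ℝ) : EReal) := by
          simp only [key]
      _ = ⨆ z : X, (((qF A x + x' x : ℝ)) + ((x' z - qF A z : ℝ) : EReal)) := by
          simp only [EReal.coe_add]
      _ = ((qF A x + x' x : ℝ) : EReal) + ⨆ z : X, ((x' z - qF A z : ℝ) : EReal) :=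
          (ereal_add_iSup _ _).symm
      _ = ((qF A x : ℝ) : EReal) + ((x' x : ℝ) : EReal) + legendre (qF A) x' := by
          rw [EReal.coe_add]; rfl
  refine ⟨hmain, fun x => ?_⟩
  have h0 : legendre (qF A) (0 : X →L[ℝ] ℝ) = 0 := by
    apply le_antisymm
    · apply iSup_le
      intro y
      have : (0 : ℝ) ≤ qF A y := by
        have := hmono y
        simp only [qF]
        linarith
      simp only [ContinuousLinearMap.zero_apply, zero_sub]
      exact_mod_cast neg_nonpos.mpr this
    · refine le_iSup_of_le 0 ?_
      simp [qF]
  have h := hmain x 0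
  rw [zero_add, h0] at h
  simpa using h
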